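/- Let R be a commutative ring, I an ideal of R, M a faithful multiplication R-module (i.e. M has zero annihilator and every submodule N of M satisfies N = (N : M)M), J a finitely generated faithful multiplication ideal of R, and P a submodule of JM. Then P is an I-primary submodule of the R-module JM if and only if (P : J) = {m ∈ M : Jm ⊆ P} is an I-primary submodule of M. -/

import Mathlib

/-- For an ideal `J` of `R` and a submodule `N` of `M`, `(N : J)` is the
submodule `{m : M | ∀ a ∈ J, a • m ∈ N}`. -/
def colonIdeal {R : Type*} [CommRing R] {M : Type*} [AddCommGroup M] [Module R M]
    (N : Submodule R M) (J : Ideal R) : Submodule R M where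
  carrier := {m : M | ∀ a ∈ J, a • m ∈ N}
  add_mem' := fun ha hb a haJ => by
    rw [smul_add]; exact N.add_mem (ha a haJ) (hb a haJ)
  zero_mem' := fun a _ => by rw [smul_zero]; exact N.zero_mem
  smul_mem' := fun r m hm a haJ => by
    rw [smul_comm]; exact N.smul_mem r (hm a haJ)

/-- `P` is an `I`-primary submodule of the `R`-module `T` (a submodule of `M`
containing `P`): `P` is proper in `T` and whenever `r • m ∈ P \ I • P` with
`m ∈ T`, either `m ∈ P` or `r ∈ √(P :  T)`. Taking `T = ⊤` recovers the usual
notion of an `I`-primary submodule of `M`. -/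
def IsIPrimaryIn {R : Type*} [CommRing R] {M : Type*} [AddCommGroup M] [Module R M]
    (I : Ideal R) (P T : Submodule R M) : Prop :=
  P < T ∧ ∀ r : R, ∀ m ∈ T, r • m ∈ P → r • m ∉ I • P →
    m ∈ P ∨ r ∈ (P.colon T).radical

section Aux

variable {R : Type*} [CommRing R] {M : Type*} [AddCommGroup M] [Module R M]

lemma mem_colonIdeal {N : Submodule R M} {J : Ideal R} {m : M} :
    m ∈ colonIdeal N J ↔ ∀ a ∈ J, a • m ∈ N := Iff.rfl

lemma smul_colonIdeal_le (N : Submodule R M) (J : Ideal R) :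
    J • colonIdeal N J ≤ N :=
  Submodule.smul_le.2 fun a ha y hy => hy a ha

lemma le_colonIdeal_smul (X : Submodule R M) (J : Ideal R) :
    X ≤ colonIdeal (J • X) J :=
  fun x hx => fun a ha => Submodule.smul_mem_smul ha hx

lemma ideal_smul_comm (I J : Ideal R) (N : Submodule R M) :
    I • (J • N) = J • (I • N) := by
  rw [← Submodule.smul_assoc, ← Submodule.smul_assoc, Ideal.smul_eq_mul, Ideal.smul_eq_mul,
    mul_comm]

lemma eq_top_of_not_le_maximal (T : Ideal R)
    (h : ∀ p : Ideal R, p.IsMaximal → ¬ T ≤ p) : T = ⊤ := by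
  by_contra hT
  obtain ⟨p, hp, hTp⟩ := Ideal.exists_le_maximal T hT
  exact h p hp hTp

/-- Decomposition of an element of a finite sum of ideals. -/
lemma exists_rep_of_mem_sum {ι : Type*} [DecidableEq ι] (C : ι → Ideal R) (s : Finset ι) :
    ∀ x ∈ ∑ i ∈ s, C i, ∃ d : ι → R, (∀ i, d i ∈ C i) ∧ x = ∑ i ∈ s, d i := by
  classical
  induction s using Finset.induction_on with
  | empty =>
      intro x hx
      rw [Finset.sum_empty] at hx
      refine ⟨0, fun i => (C i).zero_mem, ?_⟩
      simpa using (Submodule.mem_bot R).mp hx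
  | @insert j s hj ih =>
      intro x hx
      rw [Finset.sum_insert hj] at hx
      rw [Submodule.add_eq_sup] at hx
      obtain ⟨y, hy, z, hz, rfl⟩ := Submodule.mem_sup.mp hx
      obtain ⟨d, hd, hsum⟩ := ih z hz
      refine ⟨Function.update d j y, ?_, ?_⟩
      · intro i
        by_cases hij : i = j
        · subst hij; simpa using hy
        · simpa [Function.update_of_ne hij] using hd i
      · rw [Finset.sum_insert hj, Function.update_self]
        congr 1
        rw [hsum]
        exact Finset.sum_congr rfl fun i hi =>
          (Function.update_of_ne (ne_of_mem_of_not_mem hi hj) _ _).symm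

/-- A finitely generated faithful multiplication ideal admits a "partition of unity":
`1 = ∑ dᵢ` with `dᵢ J ⊆ (aᵢ)` for generators `aᵢ` of `J`. -/
lemma exists_partition (J : Ideal R) (hJfg : J.FG)
    (hJfaithful : (J : Submodule R R).annihilator = ⊥)
    (hJmult : ∀ K : Ideal R, K ≤ J → ∃ C : Ideal R, K = C * J) :
    ∃ (n : ℕ) (a d : Fin n → R), Ideal.span (Set.range a) = J ∧ (∑ i, d i) = 1 ∧
      ∀ i, ∀ b ∈ J, d i * b ∈ Ideal.span {a i} := by
  classical
  obtain ⟨n, a, ha⟩ := Submodule.fg_iff_exists_fin_generating_family.mp hJfg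
  have haJ : ∀ i, a i ∈ J := fun i => ha ▸ Submodule.subset_span ⟨i, rfl⟩
  choose C hC using fun i =>
    hJmult (Ideal.span {a i}) (Ideal.span_le.mpr (Set.singleton_subset_iff.mpr (haJ i)))
  set Ct : Ideal R := ∑ i, C i with hCt
  have hCile : ∀ i, C i ≤ Ct := by
    intro i
    have := Finset.single_le_sum (f := C) (fun j _ => bot_le) (Finset.mem_univ i)
    exact this
  have hJle : J ≤ Ct • J := by
    rw [Ideal.smul_eq_mul]
    conv_lhs => rw [← ha]
    refine Submodule.span_le.2 ?_
    rintro x ⟨i, rfl⟩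
    have h1 : a i ∈ Ideal.span {a i} := Submodule.subset_span rfl
    rw [hC i] at h1
    exact Ideal.mul_mono_left (hCile i) h1
  obtain ⟨r, hr1, hr0⟩ :=
    Submodule.exists_sub_one_mem_and_smul_eq_zero_of_fg_of_le_smul Ct J hJfg hJle
  have hrz : r = 0 := by
    have : r ∈ (J : Submodule R R).annihilator := Submodule.mem_annihilator.mpr hr0
    rwa [hJfaithful, Submodule.mem_bot] at this
  have h1C : (1 : R) ∈ Ct := by
    have : (-1 : R) ∈ Ct := by simpa [hrz] using hr1
    simpa using Ct.neg_mem this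
  obtain ⟨d, hdC, hdsum⟩ := exists_rep_of_mem_sum C Finset.univ 1 h1C
  refine ⟨n, a, d, ha, hdsum.symm, ?_⟩
  intro i b hb
  rw [hC i]
  exact Ideal.mul_mem_mul (hdC i) hb

variable {J : Ideal R} {n : ℕ} {a d : Fin n → R}

/-- Representation of elements of `J • X` in terms of generators of `J`. -/
lemma exists_rep_smul (hJa : Ideal.span (Set.range a) = J) (X : Submodule R M) {x : M}
    (hx : x ∈ J • X) : ∃ ξ : Fin n → M, (∀ i, ξ i ∈ X) ∧ x = ∑ i, a i • ξ i := by
  refine Submodule.smul_induction_on hx ?_ ?_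
  · intro b hb y hy
    rw [← hJa] at hb
    obtain ⟨c, hc⟩ := (Submodule.mem_span_range_iff_exists_fun R).mp hb
    refine ⟨fun i => c i • y, fun i => X.smul_mem _ hy, ?_⟩
    rw [← hc, Finset.sum_smul]
    exact Finset.sum_congr rfl fun i _ => by
      rw [smul_assoc]; exact smul_comm _ _ _
  · rintro x y ⟨ξ, hξ, rfl⟩ ⟨η, hη, rfl⟩
    exact ⟨fun i => ξ i + η i, fun i => X.add_mem (hξ i) (hη i), by
      rw [← Finset.sum_add_distrib]
      exact Finset.sum_congr rfl fun i _ => (smul_add _ _ _).symm⟩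

lemma partition_exists_not_mem (hd1 : (∑ i, d i) = 1) {p : Ideal R} (hp : p.IsMaximal) :
    ∃ i, d i ∉ p := by
  by_contra h
  push_neg at h
  have : (1 : R) ∈ p := hd1 ▸ Ideal.sum_mem p fun i _ => h i
  exact hp.ne_top (Ideal.eq_top_of_isUnit_mem p this isUnit_one)

/-- Key lemma (G2): if `N ≤ J • ⊤` then `J • (N : J) = N`. -/
lemma smul_colonIdeal_eq (hJa : Ideal.span (Set.range a) = J) (hd1 : (∑ i, d i) = 1)
    (hd : ∀ i, ∀ b ∈ J, d i * b ∈ Ideal.span {a i})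
    (N : Submodule R M) (hN : N ≤ J • (⊤ : Submodule R M)) :
    J • colonIdeal N J = N := by
  have haJ : ∀ i, a i ∈ J := fun i => hJa ▸ Submodule.subset_span ⟨i, rfl⟩
  refine le_antisymm (smul_colonIdeal_le N J) ?_
  intro x hxN
  have hT : ((J • colonIdeal N J).colon (Submodule.span R {x})) = ⊤ := by
    refine eq_top_of_not_le_maximal _ ?_
    intro p hp hle
    obtain ⟨i, hdi⟩ := partition_exists_not_mem hd1 hp
    obtain ⟨m, hm, hrep⟩ := exists_rep_smul hJa ⊤ (hN hxN)
    choose e he using fun j => Ideal.mem_span_singleton'.mp (hd i (a j) (haJ j))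
    -- y := ∑ j, (d i * e j) • m j
    set y : M := ∑ j, (d i * e j) • m j with hy
    have hyN : y ∈ colonIdeal N J := by
      refine mem_colonIdeal.mpr fun b hb => ?_
      obtain ⟨f, hf⟩ := Ideal.mem_span_singleton'.mp (hd i b hb)
      have hby : b • y = (f * d i) • x := by
        rw [hy, hrep, Finset.smul_sum, Finset.smul_sum]
        refine Finset.sum_congr rfl fun j _ => ?_
        rw [smul_smul, smul_smul]
        congr 1
        linear_combination (-(e j)) * hf + f * he j
      rw [hby]
      exact N.smul_mem _ hxN
    have hkey : (d i * d i) • x = a i • y := by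
      rw [hy, hrep, Finset.smul_sum, Finset.smul_sum]
      refine Finset.sum_congr rfl fun j _ => ?_
      rw [smul_smul, smul_smul]
      congr 1
      linear_combination (-(d i)) * he j
    have : d i * d i ∈ (J • colonIdeal N J).colon (Submodule.span R {x}) := by
      rw [Submodule.mem_colon_span_singleton, hkey]
      exact Submodule.smul_mem_smul (haJ i) hyN
    have : d i * d i ∈ p := hle this
    exact hdi ((hp.isPrime.mem_or_mem this).elim id id)
  have : (1 : R) ∈ ((J • colonIdeal N J).colon (Submodule.span R {x})) := by
    rw [hT]; exact Submodule.mem_top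
  simpa using Submodule.mem_colon_span_singleton.mp this

/-- Key lemma (G3, weak form): `(J • X : J) ≤ X ⊔ (0 : J)`. -/
lemma colonIdeal_smul_le' (hJa : Ideal.span (Set.range a) = J) (hd1 : (∑ i, d i) = 1)
    (hd : ∀ i, ∀ b ∈ J, d i * b ∈ Ideal.span {a i}) (X : Submodule R M) :
    colonIdeal (J • X) J ≤ X ⊔ colonIdeal ⊥ J := by
  have haJ : ∀ i, a i ∈ J := fun i => hJa ▸ Submodule.subset_span ⟨i, rfl⟩
  intro x hx
  have hT : ((X ⊔ colonIdeal ⊥ J).colon (Submodule.span R {x})) = ⊤ := by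
    refine eq_top_of_not_le_maximal _ ?_
    intro p hp hle
    obtain ⟨i, hdi⟩ := partition_exists_not_mem hd1 hp
    obtain ⟨ξ, hξ, hrep⟩ := exists_rep_smul hJa X (hx (a i) (haJ i))
    choose e he using fun j => Ideal.mem_span_singleton'.mp (hd i (a j) (haJ j))
    set χ : M := ∑ j, e j • ξ j with hχ
    have hχX : χ ∈ X := Submodule.sum_mem _ fun j _ => X.smul_mem _ (hξ j)
    have hz : a i • (d i • x - χ) = 0 := by
      rw [smul_sub, sub_eq_zero]
      calc a i • d i • x = d i • (a i • x) := smul_comm _ _ _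
        _ = ∑ j, (d i * a j) • ξ j := by
            rw [hrep, Finset.smul_sum]
            exact Finset.sum_congr rfl fun j _ => (smul_smul _ _ _)
        _ = a i • χ := by
            rw [hχ, Finset.smul_sum]
            refine Finset.sum_congr rfl fun j _ => ?_
            rw [smul_smul, ← he j, mul_comm (e j) (a i)]
    set z : M := d i • x - χ with hzdef
    have hdz : d i • z ∈ colonIdeal ⊥ J := by
      refine mem_colonIdeal.mpr fun b hb => ?_
      obtain ⟨f, hf⟩ := Ideal.mem_span_singleton'.mp (hd i b hb)
      have hbz : b • d i • z = f • (a i • z) := by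
        rw [smul_smul, smul_smul, mul_comm b (d i), ← hf, mul_smul]
      rw [hbz, hz]
      simp
    have hmem : (d i * d i) • x ∈ X ⊔ colonIdeal ⊥ J := by
      have : (d i * d i) • x = d i • χ + d i • z := by
        rw [hzdef, smul_sub, ← smul_smul]
        abel
      rw [this]
      exact Submodule.add_mem_sup (X.smul_mem _ hχX) hdz
    have : d i * d i ∈ p := hle (Submodule.mem_colon_span_singleton.mpr hmem)
    exact hdi ((hp.isPrime.mem_or_mem this).elim id id)
  have : (1 : R) ∈ ((X ⊔ colonIdeal ⊥ J).colon (Submodule.span R {x})) := by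
    rw [hT]; exact Submodule.mem_top
  simpa using Submodule.mem_colon_span_singleton.mp this

/-- (G1): if `M` and `J` are faithful and `M` is multiplication, `(0 : J) = 0`. -/
lemma colonIdeal_bot_eq (hMfaithful : (⊤ : Submodule R M).annihilator = ⊥)
    (hMmult : ∀ N : Submodule R M, (N.colon ⊤) • (⊤ : Submodule R M) = N)
    (hJfaithful : (J : Submodule R R).annihilator = ⊥) :
    colonIdeal (⊥ : Submodule R M) J = ⊥ := by
  refine le_antisymm ?_ bot_le
  intro m hm
  replace hm := mem_colonIdeal.mp hm
  have hB : ((Submodule.span R {m}).colon ⊤) = ⊥ := by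
    refine le_antisymm ?_ bot_le
    intro b hb
    have hbJ : ∀ c ∈ J, c * b = 0 := by
      intro c hc
      have : c * b ∈ (⊤ : Submodule R M).annihilator := by
        refine Submodule.mem_annihilator.mpr fun x _ => ?_
        have hbx : b • x ∈ Submodule.span R {m} :=
          Submodule.mem_colon.mp hb x trivial
        obtain ⟨t, ht⟩ := Submodule.mem_span_singleton.mp hbx
        have hcm : c • m = 0 := (Submodule.mem_bot R).mp (hm c hc)
        rw [mul_smul, ← ht, smul_comm, hcm, smul_zero]
      rwa [hMfaithful, Submodule.mem_bot] at this
    have : b ∈ (J : Submodule R R).annihilator := by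
      refine Submodule.mem_annihilator.mpr fun c hc => ?_
      rw [smul_eq_mul, mul_comm]
      exact hbJ c hc
    rwa [hJfaithful, Submodule.mem_bot] at this
  have : Submodule.span R {m} = ⊥ := by
    rw [← hMmult (Submodule.span R {m}), hB, Submodule.bot_smul]
  have := this ▸ Submodule.mem_span_singleton_self m
  simpa using this

/-- (H1): transfer of colon ideals. -/
lemma colon_transfer (P : Submodule R M) (J : Ideal R) :
    P.colon (J • ⊤ : Submodule R M) = (colonIdeal P J).colon (⊤ : Submodule R M) := by
  ext r
  rw [Submodule.mem_colon, Submodule.mem_colon]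
  constructor
  · intro h m _
    refine mem_colonIdeal.mpr fun b hb => ?_
    rw [smul_comm]
    exact h (b • m) (Submodule.smul_mem_smul hb trivial)
  · intro h x hx
    refine Submodule.smul_induction_on hx ?_ ?_
    · intro b hb m _
      rw [smul_comm]
      exact mem_colonIdeal.mp (h m trivial) b hb
    · intro x y hxP hyP
      rw [smul_add]
      exact P.add_mem hxP hyP

/-- Submodule-wise version of the `I`-primary condition. -/
lemma primary_strong {P T : Submodule R M} {I' : Ideal R}
    (h : IsIPrimaryIn I' P T) {r : R} {X : Submodule R M}
    (hXT : X ≤ T) (hrX : ∀ x ∈ X, r • x ∈ P)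
    (hex : ∃ x₀ ∈ X, r • x₀ ∉ I' • P) :
    X ≤ P ∨ r ∈ (P.colon T).radical := by
  obtain ⟨x₀, hx₀X, hx₀⟩ := hex
  by_cases hrad : r ∈ (P.colon T).radical
  · exact Or.inr hrad
  left
  have hx₀P : x₀ ∈ P := (h.2 r x₀ (hXT hx₀X) (hrX x₀ hx₀X) hx₀).resolve_right hrad
  intro x hxX
  by_cases hc : r • x ∈ I' • P
  · have hne : r • (x + x₀) ∉ I' • P := by
      rw [smul_add]
      intro hmem
      exact hx₀ (by simpa using Submodule.sub_mem _ hmem hc)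
    have hsum : x + x₀ ∈ P :=
      (h.2 r (x + x₀) (hXT (X.add_mem hxX hx₀X))
        (by rw [smul_add]; exact P.add_mem (hrX x hxX) (hrX x₀ hx₀X)) hne).resolve_right hrad
    have := P.sub_mem hsum hx₀P
    simpa using this
  · exact (h.2 r x (hXT hxX) (hrX x hxX) hc).resolve_right hrad

end Aux

theorem stmt15 {R : Type*} [CommRing R] {M : Type*} [AddCommGroup M] [Module R M]
    (I : Ideal R) (J : Ideal R) (P : Submodule R M)
    (hMfaithful : (⊤ : Submodule R M).annihilator = ⊥)
    (hMmult : ∀ N : Submodule R M, (N.colon ⊤) • (⊤ : Submodule R M) = N)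
    (hJfg : J.FG)
    (hJfaithful : (J : Submodule R R).annihilator = ⊥)
    (hJmult : ∀ K : Ideal R, K ≤ J → ∃ C : Ideal R, K = C * J)
    (hPJM : P ≤ J • (⊤ : Submodule R M)) :
    IsIPrimaryIn I P (J • (⊤ : Submodule R M)) ↔
      IsIPrimaryIn I (colonIdeal P J) (⊤ : Submodule R M) := by
  obtain ⟨n, a, d, hJa, hd1, hd⟩ := exists_partition J hJfg hJfaithful hJmult
  set Q : Submodule R M := colonIdeal P J with hQ
  have hG1 : colonIdeal (⊥ : Submodule R M) J = ⊥ :=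
    colonIdeal_bot_eq hMfaithful hMmult hJfaithful
  have hG3 : ∀ X : Submodule R M, colonIdeal (J • X) J = X := by
    intro X
    refine le_antisymm ?_ (le_colonIdeal_smul X J)
    have := colonIdeal_smul_le' hJa hd1 hd X
    rwa [hG1, sup_bot_eq] at this
  have hPQ : J • Q = P := smul_colonIdeal_eq hJa hd1 hd P hPJM
  have hcolon : P.colon (J • ⊤ : Submodule R M) = Q.colon (⊤ : Submodule R M) := colon_transfer P J
  have hIPeq : I • P = J • (I • Q) := by
    rw [← hPQ, ideal_smul_comm]
  constructor
  · rintro ⟨hlt, hprim⟩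
    have hQlt : Q < ⊤ := by
      refine lt_of_le_of_ne le_top ?_
      intro hQtop
      have : J • (⊤ : Submodule R M) = P := by rw [← hPQ, hQtop]
      exact hlt.ne this.symm
    refine ⟨hQlt, ?_⟩
    intro r m _ h1 h2
    -- h1 : r • m ∈ Q, h2 : r • m ∉ I • Q
    set W : Submodule R M := J • Submodule.span R {m} with hW
    have hWT : W ≤ J • (⊤ : Submodule R M) := smul_mono_right _ le_top
    have hrW : ∀ w ∈ W, r • w ∈ P := by
      intro w hw
      refine Submodule.smul_induction_on hw ?_ ?_
      · intro b hb y hy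
        obtain ⟨c, hc⟩ := Submodule.mem_span_singleton.mp hy
        have hkey : b • (r • m) ∈ P := mem_colonIdeal.mp h1 b hb
        have : r • (b • y) = c • (b • (r • m)) := by
          rw [← hc]
          simp only [smul_smul]
          congr 1
          ring
        rw [this]
        exact P.smul_mem _ hkey
      · intro x y hx hy
        rw [smul_add]
        exact P.add_mem hx hy
    by_cases hall : ∀ w ∈ W, r • w ∈ I • P
    · exfalso
      apply h2
      have hmem : r • m ∈ colonIdeal (J • (I • Q)) J := by
        refine mem_colonIdeal.mpr fun b hb => ?_
        have hbm : b • m ∈ W :=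
          Submodule.smul_mem_smul hb (Submodule.mem_span_singleton_self m)
        have : r • (b • m) ∈ I • P := hall _ hbm
        rw [← hIPeq, smul_comm]
        exact this
      rwa [hG3 (I • Q)] at hmem
    · push_neg at hall
      obtain ⟨w₀, hw₀W, hw₀⟩ := hall
      have := primary_strong ⟨hlt, hprim⟩ hWT hrW ⟨w₀, hw₀W, hw₀⟩
      rcases this with hWP | hrad
      · left
        exact mem_colonIdeal.mpr fun b hb =>
          hWP (Submodule.smul_mem_smul hb (Submodule.mem_span_singleton_self m))
      · right
        rwa [hcolon] at hrad
  · rintro ⟨hQlt, hprim'⟩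
    have hPlt : P < J • (⊤ : Submodule R M) := by
      refine lt_of_le_of_ne hPJM ?_
      intro hPe
      have : Q = ⊤ := by rw [hQ, hPe, hG3 ⊤]
      exact hQlt.ne this
    refine ⟨hPlt, ?_⟩
    intro r m hmJT h1 h2
    -- h1 : r • m ∈ P, h2 : r • m ∉ I • P
    set W : Submodule R M := Submodule.span R {m} ⊔ P with hW
    have hWJT : W ≤ J • (⊤ : Submodule R M) :=
      sup_le (Submodule.span_le.mpr (Set.singleton_subset_iff.mpr hmJT)) hPJM
    set X : Submodule R M := colonIdeal W J with hX
    have hJX : J • X = W := smul_colonIdeal_eq hJa hd1 hd W hWJT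
    have hmW : m ∈ W := Submodule.mem_sup_left (Submodule.mem_span_singleton_self m)
    have hrX : ∀ x ∈ X, r • x ∈ Q := by
      intro x hx
      refine mem_colonIdeal.mpr fun b hb => ?_
      have hbx : b • x ∈ W := mem_colonIdeal.mp hx b hb
      rw [hW] at hbx
      obtain ⟨y, hy, q, hq, hsum⟩ := Submodule.mem_sup.mp hbx
      obtain ⟨c, hc⟩ := Submodule.mem_span_singleton.mp hy
      have : b • (r • x) = c • (r • m) + r • q := by
        rw [smul_comm b r, ← hsum, smul_add, ← hc, smul_smul, smul_smul, mul_comm]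
      rw [this]
      exact P.add_mem (P.smul_mem _ h1) (P.smul_mem _ hq)
    by_cases hall : ∀ x ∈ X, r • x ∈ I • Q
    · exfalso
      apply h2
      have hmem : ∀ w ∈ J • X, r • w ∈ J • (I • Q) := by
        intro w hw
        refine Submodule.smul_induction_on hw ?_ ?_
        · intro b hb x hx
          rw [smul_comm r b x]
          exact Submodule.smul_mem_smul hb (hall x hx)
        · intro x y hx hy
          rw [smul_add]
          exact Submodule.add_mem _ hx hy
      have := hmem m (by rw [hJX]; exact hmW)
      rwa [← hIPeq] at this
    · push_neg at hall
      obtain ⟨x₀, hx₀X, hx₀⟩ := hall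
      have := primary_strong ⟨hQlt, hprim'⟩ le_top hrX ⟨x₀, hx₀X, hx₀⟩
      rcases this with hXQ | hrad
      · left
        have : W ≤ P := by
          rw [← hJX, ← hPQ]
          exact smul_mono_right _ hXQ
        exact this hmW
      · right
        rwa [← hcolon] at hrad
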